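/- Let C be an abelian category with a central charge Z in which every object is both Noetherian and Artinian. Then every nonzero object V of C admits a unique Harder–Narasimhan filtration: a chain of subobjects 0 = F₀ ⊂ F₁ ⊂ ⋯ ⊂ F_n = V (n ≥ 1, all inclusions strict) such that each subquotient F_i/F_{i−1} is Z-semistable and the arguments strictly decrease, i.e. arg Z(F_{i+1}/F_i) < arg Z(F_i/F_{i−1}) for 1 ≤ i ≤ n−1. Uniqueness means: any two such filtrations have the same length and the same subobjects. -/

import Mathlib

open CategoryTheory CategoryTheory.Limits

/-- `arg z ≤ arg w` for arguments taken in `(0, π]`. -/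
def argLE (z w : ℂ) : Prop := 0 ≤ ((starRingEnd ℂ) z * w).im

/-- `arg z < arg w` for arguments taken in `(0, π]`. -/
def argLT (z w : ℂ) : Prop := 0 < ((starRingEnd ℂ) z * w).im

/-- membership in `H₊ = {z : Im z > 0, or Im z = 0 and Re z < 0}`. -/
def memHPlus (z : ℂ) : Prop := 0 < z.im ∨ (z.im = 0 ∧ z.re < 0)

/-- A central charge on an abelian category: additive on short exact sequences and
taking values in `H₊` on nonzero objects. -/
def IsCentralCharge {C : Type*} [Category C] [Abelian C] (Z : C → ℂ) : Prop :=
  (∀ S : ShortComplex C, S.ShortExact → Z S.X₂ = Z S.X₁ + Z S.X₃) ∧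
  (∀ E : C, ¬ IsZero E → memHPlus (Z E))

/-- A nonzero object `E` is `Z`-semistable if `arg Z(E') ≤ arg Z(E)` for every nonzero
subobject `E'` of `E`. -/
def IsSemistable {C : Type*} [Category C] [Abelian C] (Z : C → ℂ) (E : C) : Prop :=
  ¬ IsZero E ∧ ∀ E' : Subobject E, ¬ IsZero (E' : C) → argLE (Z (E' : C)) (Z E)

/-- A finite filtration `0 = F₀ ⊂ F₁ ⊂ ⋯ ⊂ Fₙ = V` of `V` by subobjects, with strict
inclusions. -/
structure Filtration {C : Type*} [Category C] [Abelian C] (V : C) where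
  n : ℕ
  F : Fin (n + 1) → Subobject V
  bot_eq : F 0 = ⊥
  top_eq : F (Fin.last n) = ⊤
  lt : ∀ i : Fin n, F i.castSucc < F i.succ

/-- The `i`-th subquotient `F_{i+1}/F_i` of a filtration. -/
noncomputable def Filtration.quot {C : Type*} [Category C] [Abelian C] {V : C}
    (Φ : Filtration V) (i : Fin Φ.n) : C :=
  cokernel (Subobject.ofLE (Φ.F i.castSucc) (Φ.F i.succ) (Φ.lt i).le)

/-- A filtration `0 = F₀ ⊂ F₁ ⊂ ⋯ ⊂ Fₙ = V` (with `n ≥ 1`) is a Harder–Narasimhan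
filtration if every subquotient `F_i/F_{i-1}` is `Z`-semistable and the arguments of the
central charges of consecutive subquotients strictly decrease. -/
def IsHNFiltration {C : Type*} [Category C] [Abelian C] (Z : C → ℂ) {V : C}
    (Φ : Filtration V) : Prop :=
  1 ≤ Φ.n ∧ (∀ i : Fin Φ.n, IsSemistable Z (Φ.quot i)) ∧
  ∀ i j : Fin Φ.n, (i : ℕ) + 1 = (j : ℕ) → argLT (Z (Φ.quot j)) (Z (Φ.quot i))

namespace HNaux
open ZeroObject


theorem hp_ne_zero {z : ℂ} (h : memHPlus z) : z ≠ 0 := by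
  rintro rfl
  rcases h with h | ⟨_, h⟩ <;> simp at h

theorem hp_arg_pos {z : ℂ} (h : memHPlus z) : 0 < z.arg := by
  rcases h with h | ⟨h1, h2⟩
  · rcases lt_or_eq_of_le (Complex.arg_nonneg_iff.2 h.le) with h' | h'
    · exact h'
    · exfalso
      have := (Complex.arg_eq_zero_iff.1 h'.symm).2
      simp [this] at h
  · rw [Complex.arg_eq_pi_iff.2 ⟨h2, h1⟩]; exact Real.pi_pos

theorem hp_arg_le_pi {z : ℂ} (h : memHPlus z) : z.arg ≤ Real.pi :=
  Complex.arg_le_pi z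

theorem im_conj_mul (z w : ℂ) :
    ((starRingEnd ℂ) z * w).im = ‖z‖ * ‖w‖ * Real.sin (w.arg - z.arg) := by
  rcases eq_or_ne z 0 with rfl | hz
  · simp
  rcases eq_or_ne w 0 with rfl | hw
  · simp
  have hz' : ‖z‖ ≠ 0 := norm_ne_zero_iff.mpr hz
  have hw' : ‖w‖ ≠ 0 := norm_ne_zero_iff.mpr hw
  rw [Real.sin_sub, Complex.sin_arg, Complex.sin_arg, Complex.cos_arg hz, Complex.cos_arg hw,
    Complex.mul_im]
  simp only [Complex.conj_re, Complex.conj_im]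
  field_simp
  ring

theorem argLE_iff {z w : ℂ} (hz : memHPlus z) (hw : memHPlus w) :
    argLE z w ↔ z.arg ≤ w.arg := by
  have h1 : (0:ℝ) < ‖z‖ * ‖w‖ :=
    mul_pos (norm_pos_iff.mpr (hp_ne_zero hz)) (norm_pos_iff.mpr (hp_ne_zero hw))
  have hd1 : w.arg - z.arg < Real.pi := by
    have h1 := hp_arg_pos hz; have h2 := hp_arg_le_pi hw; linarith
  have hd2 : -Real.pi < w.arg - z.arg := by
    have h1 := hp_arg_pos hw; have h2 := hp_arg_le_pi hz; linarith
  rw [argLE, im_conj_mul]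
  constructor
  · intro h
    by_contra hlt
    push_neg at hlt
    have hs : Real.sin (w.arg - z.arg) < 0 := by
      have : 0 < Real.sin (z.arg - w.arg) :=
        Real.sin_pos_of_pos_of_lt_pi (by linarith) (by linarith)
      have hneg : Real.sin (w.arg - z.arg) = -Real.sin (z.arg - w.arg) := by
        rw [← Real.sin_neg]; ring_nf
      linarith
    nlinarith
  · intro h
    have : 0 ≤ Real.sin (w.arg - z.arg) :=
      Real.sin_nonneg_of_nonneg_of_le_pi (by linarith) (by linarith)
    positivity

theorem argLT_iff {z w : ℂ} (hz : memHPlus z) (hw : memHPlus w) :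
    argLT z w ↔ z.arg < w.arg := by
  have h1 : (0:ℝ) < ‖z‖ * ‖w‖ :=
    mul_pos (norm_pos_iff.mpr (hp_ne_zero hz)) (norm_pos_iff.mpr (hp_ne_zero hw))
  have hle := argLE_iff hz hw
  have hle' := argLE_iff hw hz
  have hanti : ((starRingEnd ℂ) w * z).im = -((starRingEnd ℂ) z * w).im := by
    simp [Complex.mul_im]; ring
  constructor
  · intro h
    rcases lt_or_ge z.arg w.arg with h' | h'
    · exact h'
    · exfalso
      have := hle'.2 h'
      rw [argLE, hanti] at this
      rw [argLT] at h
      linarith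
  · intro h
    rcases lt_or_ge 0 (((starRingEnd ℂ) z * w).im) with h' | h'
    · exact h'
    · exfalso
      have : argLE w z := by rw [argLE, hanti]; linarith
      have := hle'.1 this
      linarith

theorem im_add_left (u v : ℂ) :
    ((starRingEnd ℂ) u * (u + v)).im = ((starRingEnd ℂ) u * v).im := by
  simp [Complex.mul_im]; ring

theorem im_add_right (u v : ℂ) :
    ((starRingEnd ℂ) (u + v) * v).im = ((starRingEnd ℂ) u * v).im := by
  simp [Complex.mul_im]; ring

theorem im_anti (u v : ℂ) :
    ((starRingEnd ℂ) u * v).im = -((starRingEnd ℂ) v * u).im := by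
  simp [Complex.mul_im]; ring

-- seesaw lemmas
theorem argLE_add_left {u v : ℂ} : argLE u (u + v) ↔ argLE u v := by
  rw [argLE, argLE, im_add_left]
theorem argLE_add_right {u v : ℂ} : argLE (u + v) v ↔ argLE u v := by
  rw [argLE, argLE, im_add_right]
theorem argLT_add_left {u v : ℂ} : argLT u (u + v) ↔ argLT u v := by
  rw [argLT, argLT, im_add_left]
theorem argLT_add_right {u v : ℂ} : argLT (u + v) v ↔ argLT u v := by
  rw [argLT, argLT, im_add_right]
theorem argLT_of_not_argLE {u v : ℂ} (h : ¬ argLE u v) : argLT v u := by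
  rw [argLE] at h; push_neg at h
  rw [argLT]
  have := im_anti v u
  linarith


theorem im_add_rev (u v : ℂ) :
    ((starRingEnd ℂ) (u + v) * u).im = ((starRingEnd ℂ) v * u).im := by
  simp [Complex.mul_im]; ring

theorem argLE_add_rev {u v : ℂ} : argLE (u + v) u ↔ argLE v u := by
  rw [argLE, argLE, im_add_rev]
theorem argLT_add_rev {u v : ℂ} : argLT (u + v) u ↔ argLT v u := by
  rw [argLT, argLT, im_add_rev]



section LatticeHN

variable {L : Type*} [Lattice L] [BoundedOrder L] [WellFoundedGT L] [WellFoundedLT L]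
variable (z : L → ℂ)

/-- real argument of the "subquotient charge" -/
noncomputable def Fa (a b : L) : ℝ := (z b - z a).arg

variable {z}

section Seesaw

variable (hH : ∀ a b : L, a < b → memHPlus (z b - z a))

theorem sq_split {a c b : L} : z b - z a = (z c - z a) + (z b - z c) := by ring

include hH

theorem ss_left_le {a c b : L} (hac : a < c) (hcb : c < b) :
    Fa z a c ≤ Fa z a b ↔ Fa z a c ≤ Fa z c b := by
  have hu := hH a c hac; have hv := hH c b hcb; have huv := hH a b (hac.trans hcb)
  rw [Fa, Fa, Fa, ← argLE_iff hu huv, ← argLE_iff hu hv, sq_split (a := a) (b := b) (c := c),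
    argLE_add_left]

theorem ss_right_le {a c b : L} (hac : a < c) (hcb : c < b) :
    Fa z a b ≤ Fa z c b ↔ Fa z a c ≤ Fa z c b := by
  have hu := hH a c hac; have hv := hH c b hcb; have huv := hH a b (hac.trans hcb)
  rw [Fa, Fa, Fa, ← argLE_iff huv hv, ← argLE_iff hu hv, sq_split (a := a) (b := b) (c := c),
    argLE_add_right]

theorem ss_left_lt {a c b : L} (hac : a < c) (hcb : c < b) :
    Fa z a c < Fa z a b ↔ Fa z a c < Fa z c b := by
  have hu := hH a c hac; have hv := hH c b hcb; have huv := hH a b (hac.trans hcb)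
  rw [Fa, Fa, Fa, ← argLT_iff hu huv, ← argLT_iff hu hv, sq_split (a := a) (b := b) (c := c),
    argLT_add_left]

theorem ss_right_lt {a c b : L} (hac : a < c) (hcb : c < b) :
    Fa z a b < Fa z c b ↔ Fa z a c < Fa z c b := by
  have hu := hH a c hac; have hv := hH c b hcb; have huv := hH a b (hac.trans hcb)
  rw [Fa, Fa, Fa, ← argLT_iff huv hv, ← argLT_iff hu hv, sq_split (a := a) (b := b) (c := c),
    argLT_add_right]

theorem ss_rev_lt {a c b : L} (hac : a < c) (hcb : c < b) :
    Fa z a b < Fa z a c ↔ Fa z c b < Fa z a c := by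
  have hu := hH a c hac; have hv := hH c b hcb; have huv := hH a b (hac.trans hcb)
  rw [Fa, Fa, Fa, ← argLT_iff huv hu, ← argLT_iff hv hu, sq_split (a := a) (b := b) (c := c),
    argLT_add_rev]

theorem ss_rev_le {a c b : L} (hac : a < c) (hcb : c < b) :
    Fa z a b ≤ Fa z a c ↔ Fa z c b ≤ Fa z a c := by
  have hu := hH a c hac; have hv := hH c b hcb; have huv := hH a b (hac.trans hcb)
  rw [Fa, Fa, Fa, ← argLE_iff huv hu, ← argLE_iff hv hu, sq_split (a := a) (b := b) (c := c),
    argLE_add_rev]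

theorem F_le_max {a c b : L} (hac : a < c) (hcb : c < b) :
    Fa z a b ≤ max (Fa z a c) (Fa z c b) := by
  rcases le_total (Fa z a c) (Fa z c b) with h | h
  · exact le_max_of_le_right (((ss_right_le hH hac hcb).2 h))
  · rcases le_or_gt (Fa z a b) (Fa z a c) with h' | h'
    · exact le_max_of_le_left h'
    · exact absurd ((ss_left_lt hH hac hcb).1 h') (not_lt.2 h)

theorem F_ge_min {a c b : L} (hac : a < c) (hcb : c < b) :
    min (Fa z a c) (Fa z c b) ≤ Fa z a b := by
  rcases le_total (Fa z a c) (Fa z c b) with h | h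
  · exact le_trans (min_le_left _ _) (((ss_left_le hH hac hcb).2 h))
  · rcases le_or_gt (Fa z c b) (Fa z a b) with h' | h'
    · exact le_trans (min_le_right _ _) h'
    · exact absurd ((ss_right_lt hH hac hcb).1 h') (not_lt.2 h)

end Seesaw

section Attain

variable (hH : ∀ a b : L, a < b → memHPlus (z b - z a))
variable (hMod : ∀ a b : L, z (a ⊔ b) - z b = z a - z (a ⊓ b))

include hH hMod

theorem attain : ∀ b a : L, a < b →
    ∃ m, a < m ∧ m ≤ b ∧ ∀ x, a < x → x ≤ b → Fa z a x ≤ Fa z a m := by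
  intro b
  induction b using WellFoundedLT.induction with
  | ind b IH =>
  intro a hab
  set W : Set L := {y | a < y ∧ y ≤ b ∧ Fa z a b < Fa z a y} with hWdef
  by_cases hW : W.Nonempty
  · obtain ⟨s, hsW, hsmax⟩ := wellFounded_gt.has_min W hW
    obtain ⟨hs1, hs2, hs3⟩ := hsW
    have hsb : s < b := lt_of_le_of_ne hs2 (fun h => by simp [h] at hs3)
    -- key claim : every member of W is dominated by something under s
    have key : ∀ x ∈ W, ∃ d, a < d ∧ d ≤ s ∧ Fa z a x ≤ Fa z a d := by
      intro x hx
      obtain ⟨hx1, hx2, hx3⟩ := hx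
      obtain ⟨d, hdD, hdmin⟩ := wellFounded_lt.has_min
        {y | a < y ∧ y ≤ x ∧ Fa z a x ≤ Fa z a y} ⟨x, hx1, le_rfl, le_rfl⟩
      obtain ⟨hd1, hd2, hd3⟩ := hdD
      have hsemi : ∀ y, a < y → y < d → Fa z a y < Fa z a x := by
        intro y hy1 hy2
        by_contra hc
        exact hdmin y ⟨hy1, hy2.le.trans hd2, not_lt.1 hc⟩ hy2
      refine ⟨d, hd1, ?_, hd3⟩
      by_contra hds
      set e := d ⊔ s with he
      have hse : s < e := by
        rcases lt_or_eq_of_le (le_sup_right : s ≤ e) with h | h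
        · exact h
        · exfalso; apply hds; rw [h]; exact le_sup_left
      have heb : e ≤ b := sup_le (hd2.trans hx2) hs2
      have hae : a < e := hs1.trans hse
      -- the charge of e over s equals the charge of d over d ⊓ s
      have hmod := hMod d s
      have hwmem : memHPlus (z e - z s) := hH s e hse
      have hwarg : Fa z a d ≤ Fa z s e := by
        have hainf : a ≤ d ⊓ s := le_inf hd1.le hs1.le
        rcases lt_or_eq_of_le hainf with hlt | heq
        · have hinfd : d ⊓ s < d := by
            rcases lt_or_eq_of_le (inf_le_left : d ⊓ s ≤ d) with h | h
            · exact h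
            · exact absurd (h ▸ inf_le_right : d ≤ s) hds
          have h1 : Fa z a (d ⊓ s) < Fa z a x := hsemi _ hlt hinfd
          have h2 : Fa z a (d ⊓ s) ≤ Fa z a d := le_of_lt (lt_of_lt_of_le h1 hd3)
          have h3 : Fa z a d ≤ Fa z (d ⊓ s) d :=
            (ss_right_le hH hlt hinfd).2 ((ss_left_le hH hlt hinfd).1 h2)
          have : Fa z (d ⊓ s) d = Fa z s e := by rw [Fa, Fa, hmod]
          clear hds; linarith
        · have : Fa z a d = Fa z s e := by rw [Fa, Fa, hmod, ← heq]
          clear hds; linarith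
      have hemem : e ∈ W := by
        refine ⟨hae, heb, ?_⟩
        have := F_ge_min hH hs1 hse
        have h4 : Fa z a b < min (Fa z a s) (Fa z s e) :=
          lt_min hs3 (lt_of_lt_of_le (lt_of_lt_of_le hx3 hd3) hwarg)
        clear hds; linarith
      exact hsmax e hemem hse
    obtain ⟨m, hm1, hm2, hm3⟩ := IH s hsb a hs1
    refine ⟨m, hm1, hm2.trans hsb.le, fun x hx1 hx2 => ?_⟩
    by_cases hxW : Fa z a b < Fa z a x
    · obtain ⟨d, hd1, hd2, hd3⟩ := key x ⟨hx1, hx2, hxW⟩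
      exact hd3.trans (hm3 d hd1 hd2)
    · have h5 : Fa z a s ≤ Fa z a m := hm3 s hs1 le_rfl
      push_neg at hxW
      linarith
  · refine ⟨b, hab, le_rfl, fun x h1 h2 => ?_⟩
    by_contra hc
    exact hW ⟨x, h1, h2, not_le.1 hc⟩

theorem mds (a : L) (ha : a < (⊤ : L)) :
    ∃ c, a < c ∧ (∀ x, a < x → Fa z a x ≤ Fa z a c) ∧
      (∀ y, c < y → Fa z a y < Fa z a c) := by
  obtain ⟨m, hm1, _, hm3⟩ := attain hH hMod ⊤ a ha
  obtain ⟨c, hcW, hcmax⟩ := wellFounded_gt.has_min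
    {c | a < c ∧ ∀ x, a < x → Fa z a x ≤ Fa z a c}
    ⟨m, hm1, fun x hx => hm3 x hx le_top⟩
  refine ⟨c, hcW.1, hcW.2, fun y hy => ?_⟩
  have h1 : Fa z a y ≤ Fa z a c := hcW.2 y (hcW.1.trans hy)
  rcases lt_or_eq_of_le h1 with h | h
  · exact h
  · exact absurd hy (hcmax y ⟨hcW.1.trans hy, fun x hx => (hcW.2 x hx).trans h.ge⟩)

end Attain

section Chains

variable (z) in
/-- Harder-Narasimhan chain in `ℕ`-indexed form, from `a` to `⊤`. -/
def NChain (a : L) (n : ℕ) (f : ℕ → L) : Prop :=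
  f 0 = a ∧ f n = ⊤ ∧ (∀ k, k < n → f k < f (k + 1)) ∧
  (∀ k, k < n → ∀ x, f k < x → x ≤ f (k + 1) →
    argLE (z x - z (f k)) (z (f (k + 1)) - z (f k))) ∧
  (∀ k, k + 1 < n → Fa z (f (k + 1)) (f (k + 2)) < Fa z (f k) (f (k + 1)))

variable (hH : ∀ a b : L, a < b → memHPlus (z b - z a))
variable (hMod : ∀ a b : L, z (a ⊔ b) - z b = z a - z (a ⊓ b))

include hH

/-- semistability in real-argument form -/
theorem nchain_semiF {a : L} {n : ℕ} {f : ℕ → L} (hf : NChain z a n f) {k : ℕ} (hk : k < n)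
    {x : L} (h1 : f k < x) (h2 : x ≤ f (k + 1)) : Fa z (f k) x ≤ Fa z (f k) (f (k + 1)) := by
  rcases lt_or_eq_of_le h2 with h | h
  · exact (argLE_iff (hH _ _ h1) (hH _ _ (hf.2.2.1 k hk))).1 (hf.2.2.2.1 k hk x h1 h2)
  · rw [h]

include hMod

theorem chain_exists : ∀ a : L, a < (⊤ : L) → ∃ n f, 1 ≤ n ∧ NChain z a n f := by
  intro a
  induction a using WellFoundedGT.induction with
  | ind a IH =>
  intro ha
  obtain ⟨c, hc1, hc2, hc3⟩ := mds hH hMod a ha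
  rcases eq_or_lt_of_le (le_top : c ≤ ⊤) with htop | htop
  · refine ⟨1, fun k => if k = 0 then a else ⊤, le_rfl, rfl, by simp, ?_, ?_, by omega⟩
    · intro k hk
      have hk0 : k = 0 := by omega
      simpa [hk0] using ha
    · intro k hk x h1 h2
      have hk0 : k = 0 := by omega
      subst hk0
      simp only [if_pos rfl, if_neg one_ne_zero] at h1 h2 ⊢
      have := hc2 x h1
      rw [htop] at hc1 hc2
      exact (argLE_iff (hH _ _ h1) (hH _ _ ha)).2 (by simpa [Fa] using hc2 x h1)
  · obtain ⟨n, g, hn1, hg⟩ := IH c hc1 htop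
    obtain ⟨hg0, hgn, hglt, hgsemi, hgdec⟩ := hg
    refine ⟨n + 1, fun k => if k = 0 then a else g (k - 1), by omega, rfl, by simp [hgn], ?_, ?_, ?_⟩
    · intro k hk
      rcases Nat.eq_zero_or_pos k with rfl | hk0
      · simpa [hg0] using hc1
      · have h1 : ¬ (k = 0) := by omega
        have h2 : ¬ (k + 1 = 0) := by omega
        simp only [if_neg h1, if_neg h2]
        have : k - 1 < n := by omega
        have := hglt _ this
        have hkk : k - 1 + 1 = k + 1 - 1 := by omega
        rwa [hkk] at this
    · intro k hk x h1 h2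
      rcases Nat.eq_zero_or_pos k with rfl | hk0
      · simp only [if_pos rfl, if_neg one_ne_zero] at h1 h2 ⊢
        simp only [Nat.sub_self, hg0] at h2 ⊢
        exact (argLE_iff (hH _ _ h1) (hH _ _ hc1)).2 (hc2 x h1)
      · have hk1 : ¬ (k = 0) := by omega
        have hk2 : ¬ (k + 1 = 0) := by omega
        simp only [if_neg hk1, if_neg hk2] at h1 h2 ⊢
        have h3 : k - 1 < n := by omega
        have hkk : k - 1 + 1 = k + 1 - 1 := by omega
        rw [← hkk] at h2 ⊢
        exact hgsemi _ h3 x h1 h2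
    · intro k hk
      rcases Nat.eq_zero_or_pos k with rfl | hk0
      · -- first junction
        simp only [if_pos rfl, if_neg one_ne_zero, if_neg (two_ne_zero)]
        norm_num
        rw [hg0]
        have hn1' : 1 ≤ n := hn1
        have hlt01 : g 0 < g 1 := hglt 0 (by omega)
        rw [hg0] at hlt01
        have := hc3 (g 1) hlt01
        exact (ss_rev_lt hH hc1 hlt01).1 this
      · have hk1 : ¬ (k = 0) := by omega
        have hk2 : ¬ (k + 1 = 0) := by omega
        have hk3 : ¬ (k + 2 = 0) := by omega
        simp only [if_neg hk1, if_neg hk2, if_neg hk3]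
        have h3 : (k - 1) + 1 < n := by omega
        have e1 : k - 1 + 1 = k + 1 - 1 := by omega
        have e2 : k - 1 + 2 = k + 2 - 1 := by omega
        have := hgdec (k - 1) h3
        rwa [e1, e2] at this

omit hH hMod in
theorem nchain_mono {a : L} {n : ℕ} {f : ℕ → L} (hf : NChain z a n f) :
    ∀ i j, i ≤ j → j ≤ n → f i ≤ f j := by
  intro i j
  induction j with
  | zero => intro h _; have : i = 0 := by omega
            rw [this]
  | succ j IHj =>
    intro hij hjn
    rcases Nat.lt_or_ge i (j + 1) with h | h
    · exact (IHj (by omega) (by omega)).trans (hf.2.2.1 j (by omega)).le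
    · have : i = j + 1 := by omega
      rw [this]

include hH hMod

theorem theta_lt {a : L} {n : ℕ} {f : ℕ → L} (hf : NChain z a n f) :
    ∀ k, 1 ≤ k → k < n → Fa z (f k) (f (k + 1)) < Fa z a (f 1) := by
  intro k
  induction k with
  | zero => omega
  | succ k IHk =>
    intro _ hk
    rcases Nat.eq_zero_or_pos k with rfl | h
    · have := hf.2.2.2.2 0 hk
      rwa [hf.1] at this
    · exact (hf.2.2.2.2 k hk).trans (IHk h (by omega))

theorem chain_KL_aux {a : L} {n : ℕ} {f : ℕ → L} (hf : NChain z a n f) :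
    ∀ k, k ≤ n → ∀ d, a < d → d ≤ f k → ¬ d ≤ f 1 → Fa z a d < Fa z a (f 1) := by
  intro k
  induction k with
  | zero =>
    intro _ d had hdk _
    rw [hf.1] at hdk
    exact absurd hdk had.not_ge
  | succ k IHk =>
    intro hk1 d had hdk hd1
    rcases Nat.eq_zero_or_pos k with rfl | hkpos
    · exact absurd hdk hd1
    by_cases hdj : d ≤ f k
    · exact IHk (by omega) d had hdj hd1
    · have hkn : k < n := by omega
      have hstep : f k < f (k + 1) := hf.2.2.1 k hkn
      have hafk : a ≤ f k := by
        have := nchain_mono hf 0 k (by omega) (by omega)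
        rwa [hf.1] at this
      have hfke : f k < d ⊔ f k := by
        rcases lt_or_eq_of_le (le_sup_right : f k ≤ d ⊔ f k) with h | h
        · exact h
        · exfalso; apply hdj; rw [h]; exact le_sup_left
      have heb : d ⊔ f k ≤ f (k + 1) := sup_le hdk hstep.le
      have hd'd : d ⊓ f k < d := by
        rcases lt_or_eq_of_le (inf_le_left : d ⊓ f k ≤ d) with h | h
        · exact h
        · exfalso; apply hdj; rw [← h]; exact inf_le_right
      have hmod := hMod d (f k)
      have hvlt : Fa z (d ⊓ f k) d < Fa z a (f 1) := by
        have h1 : Fa z (f k) (d ⊔ f k) ≤ Fa z (f k) (f (k + 1)) :=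
          nchain_semiF hH hf hkn hfke heb
        have h2 : Fa z (f k) (d ⊔ f k) = Fa z (d ⊓ f k) d := by rw [Fa, Fa, hmod]
        have h3 := theta_lt hH hMod hf k hkpos hkn
        clear hdj hd1; linarith
      have hainf : a ≤ d ⊓ f k := le_inf had.le hafk
      rcases lt_or_eq_of_le hainf with hlt | heq
      · have hd'le : Fa z a (d ⊓ f k) ≤ Fa z a (f 1) := by
          by_cases hdf1 : d ⊓ f k ≤ f 1
          · have h0 : f 0 < d ⊓ f k := by rw [hf.1]; exact hlt
            have h5 := nchain_semiF hH hf (show 0 < n by omega) h0 hdf1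
            rwa [hf.1] at h5
          · exact (IHk (by omega) (d ⊓ f k) hlt inf_le_right hdf1).le
        rcases le_or_gt (Fa z a (d ⊓ f k)) (Fa z (d ⊓ f k) d) with hcase | hcase
        · have := (ss_right_le hH hlt hd'd).2 hcase
          clear hdj hd1; linarith
        · have := (ss_rev_lt hH hlt hd'd).2 hcase
          clear hdj hd1; linarith
      · rwa [← heq] at hvlt

theorem chain_KL {a : L} {n : ℕ} {f : ℕ → L} (hf : NChain z a n f) (d : L) (had : a < d)
    (hle : Fa z a (f 1) ≤ Fa z a d) : d ≤ f 1 := by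
  by_contra hd1
  have hdn : d ≤ f n := by rw [hf.2.1]; exact le_top
  have := chain_KL_aux hH hMod hf n le_rfl d had hdn hd1
  clear hd1; linarith

theorem chain_first_le {a : L} {n m : ℕ} {f g : ℕ → L} (hn : 1 ≤ n) (hm : 1 ≤ m)
    (hf : NChain z a n f) (hg : NChain z a m g) : Fa z a (g 1) ≤ Fa z a (f 1) := by
  have hag : a < g 1 := by have := hg.2.2.1 0 hm; rwa [hg.1] at this
  by_contra h
  push_neg at h
  have h2 : g 1 ≤ f 1 := chain_KL hH hMod hf (g 1) hag h.le
  have h0 : f 0 < g 1 := by rw [hf.1]; exact hag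
  have h3 := nchain_semiF hH hf hn h0 h2
  rw [hf.1] at h3
  linarith

theorem chain_first_eq {a : L} {n m : ℕ} {f g : ℕ → L} (hn : 1 ≤ n) (hm : 1 ≤ m)
    (hf : NChain z a n f) (hg : NChain z a m g) : f 1 = g 1 := by
  have haf : a < f 1 := by have := hf.2.2.1 0 hn; rwa [hf.1] at this
  have hag : a < g 1 := by have := hg.2.2.1 0 hm; rwa [hg.1] at this
  have h1 := chain_first_le hH hMod hn hm hf hg
  have h2 := chain_first_le hH hMod hm hn hg hf
  exact le_antisymm (chain_KL hH hMod hg (f 1) haf h1)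
    (chain_KL hH hMod hf (g 1) hag h2)

theorem chain_unique : ∀ n a (f : ℕ → L) m (g : ℕ → L), 1 ≤ n → 1 ≤ m →
    NChain z a n f → NChain z a m g → n = m ∧ ∀ k, k ≤ n → f k = g k := by
  intro n
  induction n using Nat.strong_induction_on with
  | _ n IHn =>
  intro a f m g hn hm hf hg
  have h1 : f 1 = g 1 := chain_first_eq hH hMod hn hm hf hg
  by_cases htop : f 1 = (⊤ : L)
  · have hn1 : n = 1 := by
      by_contra h
      have h2 := hf.2.2.1 1 (by omega)
      rw [htop] at h2
      exact not_top_lt h2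
    have hm1 : m = 1 := by
      by_contra h
      have h2 := hg.2.2.1 1 (by omega)
      rw [← h1, htop] at h2
      exact not_top_lt h2
    subst hn1; subst hm1
    refine ⟨rfl, fun k hk => ?_⟩
    interval_cases k
    · rw [hf.1, hg.1]
    · exact h1
  · have hn2 : 2 ≤ n := by
      by_contra h
      have : n = 1 := by omega
      rw [← this] at htop
      exact htop hf.2.1
    have hm2 : 2 ≤ m := by
      by_contra h
      have : m = 1 := by omega
      rw [h1, ← this] at htop
      exact htop hg.2.1
    obtain ⟨n', rfl⟩ : ∃ n', n = n' + 1 := ⟨n - 1, by omega⟩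
    obtain ⟨m', rfl⟩ : ∃ m', m = m' + 1 := ⟨m - 1, by omega⟩
    have hf' : NChain z (f 1) n' (fun k => f (k + 1)) :=
      ⟨rfl, hf.2.1, fun k hk => hf.2.2.1 (k + 1) (by omega),
        fun k hk => hf.2.2.2.1 (k + 1) (by omega),
        fun k hk => hf.2.2.2.2 (k + 1) (by omega)⟩
    have hg' : NChain z (f 1) m' (fun k => g (k + 1)) := by
      rw [h1]
      exact ⟨rfl, hg.2.1, fun k hk => hg.2.2.1 (k + 1) (by omega),
        fun k hk => hg.2.2.2.1 (k + 1) (by omega),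
        fun k hk => hg.2.2.2.2 (k + 1) (by omega)⟩
    obtain ⟨heq, hfun⟩ := IHn n' (by omega) (f 1) _ m' _ (by omega) (by omega) hf' hg'
    refine ⟨by omega, fun k hk => ?_⟩
    rcases Nat.eq_zero_or_pos k with rfl | hkpos
    · rw [hf.1, hg.1]
    · obtain ⟨k', rfl⟩ : ∃ k', k = k' + 1 := ⟨k - 1, by omega⟩
      exact hfun k' (by omega)

end Chains

end LatticeHN




section Cat

variable {C : Type*} [Category C] [Abelian C] {Z : C → ℂ} (hZ : IsCentralCharge Z)

include hZ

theorem Z_zero {X : C} (h : IsZero X) : Z X = 0 := by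
  have hm : Mono (0 : X ⟶ X) := by
    have : (0 : X ⟶ X) = 𝟙 X := h.eq_of_src _ _
    rw [this]; infer_instance
  have he : Epi (0 : X ⟶ X) := by
    have : (0 : X ⟶ X) = 𝟙 X := h.eq_of_src _ _
    rw [this]; infer_instance
  have hse : (ShortComplex.mk (0 : X ⟶ X) (0 : X ⟶ X) (by simp)).ShortExact :=
    { exact := ShortComplex.exact_of_isZero_X₂ _ h, mono_f := hm, epi_g := he }
  have := hZ.1 _ hse
  exact (left_eq_add.1 this)

theorem Z_iso {X Y : C} (e : X ≅ Y) : Z X = Z Y := by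
  have hepi : Epi (0 : Y ⟶ (0 : C)) := ⟨fun g h _ => (isZero_zero C).eq_of_src g h⟩
  have hse : (ShortComplex.mk e.hom (0 : Y ⟶ (0 : C)) (by simp)).ShortExact :=
    { exact := by
        rw [ShortComplex.exact_iff_epi _ rfl]
        · exact inferInstance
      mono_f := inferInstance
      epi_g := hepi }
  have h2 := hZ.1 _ hse
  have h3 : Z ((0:C)) = 0 := Z_zero hZ (isZero_zero C)
  rw [show (ShortComplex.mk e.hom (0 : Y ⟶ (0 : C)) (by simp)).X₃ = (0:C) from rfl] at h2
  rw [h2, h3, add_zero]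

variable {V : C}

theorem Z_quot {a b : Subobject V} (h : a ≤ b) :
    Z ((b : C)) = Z ((a : C)) + Z (cokernel (Subobject.ofLE a b h)) := by
  have hse : (ShortComplex.mk (Subobject.ofLE a b h)
      (cokernel.π (Subobject.ofLE a b h)) (cokernel.condition _)).ShortExact :=
    { exact := ShortComplex.exact_of_g_is_cokernel _ (cokernelIsCokernel _)
      mono_f := inferInstance
      epi_g := inferInstance }
  exact hZ.1 _ hse

theorem quot_isZero {a b : Subobject V} (h : a ≤ b) (heq : a = b) :
    IsZero (cokernel (Subobject.ofLE a b h)) := by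
  subst heq
  have he : Subobject.ofLE a a h = 𝟙 _ := Subobject.ofLE_refl a
  haveI : Epi (Subobject.ofLE a a h) := by rw [he]; infer_instance
  exact (isZero_zero C).of_iso (cokernel.ofEpi _)

theorem quot_not_isZero {a b : Subobject V} (h : a ≤ b) (hlt : a < b) :
    ¬ IsZero (cokernel (Subobject.ofLE a b h)) := by
  intro hz
  haveI : Epi (Subobject.ofLE a b h) := Preadditive.epi_of_isZero_cokernel _ hz
  haveI : IsIso (Subobject.ofLE a b h) := isIso_of_mono_of_epi _
  have hba : b ≤ a := Subobject.le_of_comm (inv (Subobject.ofLE a b h)) (by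
    rw [IsIso.inv_comp_eq, Subobject.ofLE_arrow])
  exact absurd hba hlt.not_ge

theorem hH_sub {a b : Subobject V} (hlt : a < b) :
    memHPlus (Z ((b : C)) - Z ((a : C))) := by
  have := Z_quot hZ hlt.le
  have h2 := hZ.2 _ (quot_not_isZero hZ hlt.le hlt)
  rw [this]
  simpa using h2

theorem Z_memHPlus_quot {a b : Subobject V} (h : a ≤ b) (hlt : a < b) :
    memHPlus (Z (cokernel (Subobject.ofLE a b h))) :=
  hZ.2 _ (quot_not_isZero hZ h hlt)

theorem sup_desc_epi (a b : Subobject V) :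
    Epi (biprod.desc (Subobject.ofLE a (a ⊔ b) le_sup_left)
      (-(Subobject.ofLE b (a ⊔ b) le_sup_right))) := by
  set k := biprod.desc (Subobject.ofLE a (a ⊔ b) le_sup_left)
      (-(Subobject.ofLE b (a ⊔ b) le_sup_right)) with hk
  have hat : Subobject.ofLE a (a ⊔ b) le_sup_left ≫ cokernel.π k = 0 := by
    have h : biprod.inl ≫ k = Subobject.ofLE a (a ⊔ b) le_sup_left := biprod.inl_desc _ _
    rw [← h, Category.assoc, cokernel.condition, comp_zero]
  have hbt : Subobject.ofLE b (a ⊔ b) le_sup_right ≫ cokernel.π k = 0 := by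
    have h : biprod.inr ≫ k = -(Subobject.ofLE b (a ⊔ b) le_sup_right) := biprod.inr_desc _ _
    have h2 : (-(Subobject.ofLE b (a ⊔ b) le_sup_right)) ≫ cokernel.π k = 0 := by
      rw [← h, Category.assoc, cokernel.condition, comp_zero]
    rw [Preadditive.neg_comp, neg_eq_zero] at h2
    exact h2
  have haK : a ≤ Subobject.mk ((kernelSubobject (cokernel.π k)).arrow ≫
      (a ⊔ b : Subobject V).arrow) := by
    refine Subobject.le_mk_of_comm (factorThruKernelSubobject _ _ hat) ?_
    rw [← Category.assoc, factorThruKernelSubobject_comp_arrow]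
    exact Subobject.ofLE_arrow _
  have hbK : b ≤ Subobject.mk ((kernelSubobject (cokernel.π k)).arrow ≫
      (a ⊔ b : Subobject V).arrow) := by
    refine Subobject.le_mk_of_comm (factorThruKernelSubobject _ _ hbt) ?_
    rw [← Category.assoc, factorThruKernelSubobject_comp_arrow]
    exact Subobject.ofLE_arrow _
  have hKVle : Subobject.mk ((kernelSubobject (cokernel.π k)).arrow ≫
      (a ⊔ b : Subobject V).arrow) ≤ a ⊔ b :=
    Subobject.mk_le_of_comm (kernelSubobject (cokernel.π k)).arrow rfl
  have heq : Subobject.mk ((kernelSubobject (cokernel.π k)).arrow ≫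
      (a ⊔ b : Subobject V).arrow) = a ⊔ b := le_antisymm hKVle (sup_le haK hbK)
  have hφK : (Subobject.ofLE (a ⊔ b) _ heq.ge ≫
      (Subobject.underlyingIso ((kernelSubobject (cokernel.π k)).arrow ≫
        (a ⊔ b : Subobject V).arrow)).hom) ≫ (kernelSubobject (cokernel.π k)).arrow = 𝟙 _ := by
    rw [← cancel_mono (a ⊔ b : Subobject V).arrow]
    simp only [Category.assoc, Category.id_comp]
    rw [Subobject.underlyingIso_hom_comp_eq_mk, Subobject.ofLE_arrow]
  have ht0 : cokernel.π k = 0 := by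
    calc cokernel.π k = ((Subobject.ofLE (a ⊔ b) _ heq.ge ≫
          (Subobject.underlyingIso ((kernelSubobject (cokernel.π k)).arrow ≫
            (a ⊔ b : Subobject V).arrow)).hom) ≫
          (kernelSubobject (cokernel.π k)).arrow) ≫ cokernel.π k := by
          rw [hφK, Category.id_comp]
    _ = (Subobject.ofLE (a ⊔ b) _ heq.ge ≫
          (Subobject.underlyingIso ((kernelSubobject (cokernel.π k)).arrow ≫
            (a ⊔ b : Subobject V).arrow)).hom) ≫
          ((kernelSubobject (cokernel.π k)).arrow ≫ cokernel.π k) := by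
          rw [Category.assoc]
    _ = 0 := by rw [kernelSubobject_arrow_comp, comp_zero]
  exact Preadditive.epi_of_isZero_cokernel _ (IsZero.of_epi_eq_zero (cokernel.π k) ht0)

theorem Z_mod (a b : Subobject V) :
    Z (((a ⊔ b : Subobject V) : C)) - Z ((b : C)) = Z ((a : C)) - Z (((a ⊓ b : Subobject V) : C)) := by
  haveI hepik := sup_desc_epi hZ a b
  have hcond : Abelian.PullbackToBiproductIsKernel.pullbackToBiproduct
      (Subobject.ofLE a (a ⊔ b) le_sup_left) (Subobject.ofLE b (a ⊔ b) le_sup_right) ≫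
      biprod.desc (Subobject.ofLE a (a ⊔ b) le_sup_left)
        (-(Subobject.ofLE b (a ⊔ b) le_sup_right)) = 0 := by
    rw [biprod.lift_desc, Preadditive.comp_neg, pullback.condition, add_neg_cancel]
  haveI hmono : Mono (Abelian.PullbackToBiproductIsKernel.pullbackToBiproduct
      (Subobject.ofLE a (a ⊔ b) le_sup_left) (Subobject.ofLE b (a ⊔ b) le_sup_right)) := by
    have h7 : Abelian.PullbackToBiproductIsKernel.pullbackToBiproduct
        (Subobject.ofLE a (a ⊔ b) le_sup_left) (Subobject.ofLE b (a ⊔ b) le_sup_right) ≫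
        biprod.fst = pullback.fst _ _ := biprod.lift_fst _ _
    haveI : Mono (Abelian.PullbackToBiproductIsKernel.pullbackToBiproduct
        (Subobject.ofLE a (a ⊔ b) le_sup_left) (Subobject.ofLE b (a ⊔ b) le_sup_right) ≫
        biprod.fst) := by rw [h7]; infer_instance
    exact mono_of_mono _ (biprod.fst : (a : C) ⊞ (b : C) ⟶ (a : C))
  have hse : (ShortComplex.mk _ _ hcond).ShortExact :=
    { exact := ShortComplex.exact_of_f_is_kernel _
        (Abelian.PullbackToBiproductIsKernel.isLimitPullbackToBiproduct _ _)
      mono_f := hmono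
      epi_g := hepik }
  have hZ1 : Z ((a : C) ⊞ (b : C)) =
      Z (pullback (Subobject.ofLE a (a ⊔ b) le_sup_left)
        (Subobject.ofLE b (a ⊔ b) le_sup_right)) + Z (((a ⊔ b : Subobject V) : C)) := hZ.1 _ hse
  have hse2 : (ShortComplex.mk (biprod.inl : (a : C) ⟶ (a : C) ⊞ (b : C)) biprod.snd
      (by simp)).ShortExact :=
    { exact := ShortComplex.exact_of_f_is_kernel _ (biprod.isKernelSndKernelFork (a : C) (b : C))
      mono_f := inferInstance
      epi_g := inferInstance }
  have hZ2 : Z ((a : C) ⊞ (b : C)) = Z ((a : C)) + Z ((b : C)) := hZ.1 _ hse2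
  -- identify the pullback with a ⊓ b
  haveI : Mono (pullback.fst (Subobject.ofLE a (a ⊔ b) le_sup_left)
      (Subobject.ofLE b (a ⊔ b) le_sup_right) ≫ a.arrow) := mono_comp _ _
  have hpbcond : pullback.fst (Subobject.ofLE a (a ⊔ b) le_sup_left)
      (Subobject.ofLE b (a ⊔ b) le_sup_right) ≫ a.arrow =
      pullback.snd (Subobject.ofLE a (a ⊔ b) le_sup_left)
        (Subobject.ofLE b (a ⊔ b) le_sup_right) ≫ b.arrow := by
    rw [← Subobject.ofLE_arrow (le_sup_left : a ≤ a ⊔ b),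
      ← Subobject.ofLE_arrow (le_sup_right : b ≤ a ⊔ b), ← Category.assoc, ← Category.assoc,
      pullback.condition]
  have hm : Subobject.mk (pullback.fst (Subobject.ofLE a (a ⊔ b) le_sup_left)
      (Subobject.ofLE b (a ⊔ b) le_sup_right) ≫ a.arrow) = a ⊓ b := by
    refine le_antisymm (le_inf ?_ ?_) ?_
    · exact Subobject.mk_le_of_comm (pullback.fst _ _) rfl
    · exact Subobject.mk_le_of_comm (pullback.snd _ _) hpbcond.symm
    · refine Subobject.le_mk_of_comm (pullback.lift
        (Subobject.ofLE (a ⊓ b) a inf_le_left) (Subobject.ofLE (a ⊓ b) b inf_le_right) ?_) ?_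
      · rw [← cancel_mono (a ⊔ b : Subobject V).arrow, Category.assoc, Category.assoc,
          Subobject.ofLE_arrow, Subobject.ofLE_arrow, Subobject.ofLE_arrow,
          Subobject.ofLE_arrow]
      · rw [← Category.assoc, pullback.lift_fst, Subobject.ofLE_arrow]
  have hZpb : Z (pullback (Subobject.ofLE a (a ⊔ b) le_sup_left)
      (Subobject.ofLE b (a ⊔ b) le_sup_right)) = Z (((a ⊓ b : Subobject V) : C)) := by
    refine (Z_iso hZ (Subobject.underlyingIso _).symm).trans (Z_iso hZ (Subobject.isoOfEq _ _ hm))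
  rw [hZpb] at hZ1
  rw [hZ2] at hZ1
  linear_combination -hZ1

theorem semistable_of_lattice {a b : Subobject V} (h : a ≤ b) (hlt : a < b)
    (hsemi : ∀ c : Subobject V, a < c → c ≤ b →
      argLE (Z ((c : C)) - Z ((a : C))) (Z ((b : C)) - Z ((a : C)))) :
    IsSemistable Z (cokernel (Subobject.ofLE a b h)) := by
  set f := Subobject.ofLE a b h with hf
  set π := cokernel.π f with hπ
  refine ⟨quot_not_isZero hZ h hlt, ?_⟩
  intro E' hne
  have hj0 : (0 : (a : C) ⟶ (E' : C)) ≫ E'.arrow = f ≫ π := by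
    rw [zero_comp, cokernel.condition]
  set j := pullback.lift (0 : (a : C) ⟶ (E' : C)) f hj0 with hj
  have hjsnd : j ≫ pullback.snd E'.arrow π = f := pullback.lift_snd _ _ _
  have hjfst : j ≫ pullback.fst E'.arrow π = 0 := pullback.lift_fst _ _ _
  haveI : Mono (j ≫ pullback.snd E'.arrow π) := by rw [hjsnd]; infer_instance
  haveI hjm : Mono j := mono_of_mono _ (pullback.snd E'.arrow π)
  have hfac : ∀ {T : C} (u : T ⟶ pullback E'.arrow π) (hu : u ≫ pullback.fst E'.arrow π = 0),
      Abelian.monoLift f (u ≫ pullback.snd E'.arrow π)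
        (by rw [Category.assoc, ← pullback.condition, ← Category.assoc, hu, zero_comp]) ≫ j = u := by
    intro T u hu
    apply pullback.hom_ext
    · rw [Category.assoc, hjfst, comp_zero, hu]
    · rw [Category.assoc, hjsnd, Abelian.monoLift_comp]
  have hlim : IsLimit (KernelFork.ofι j hjfst) := by
    refine KernelFork.IsLimit.ofι _ _
      (fun {T} u hu => Abelian.monoLift f (u ≫ pullback.snd E'.arrow π)
        (by rw [Category.assoc, ← pullback.condition, ← Category.assoc, hu, zero_comp]))
      (fun {T} u hu => hfac u hu)
      (fun {T} u hu m hm => ?_)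
    apply (cancel_mono j).1
    rw [hm, hfac u hu]
  have hse : (ShortComplex.mk j (pullback.fst E'.arrow π) hjfst).ShortExact :=
    { exact := ShortComplex.exact_of_f_is_kernel _ hlim
      mono_f := hjm
      epi_g := inferInstance }
  have hZP : Z (pullback E'.arrow π) = Z ((a : C)) + Z ((E' : C)) := hZ.1 _ hse
  haveI : Mono (pullback.snd E'.arrow π ≫ b.arrow) := mono_comp _ _
  set c : Subobject V := Subobject.mk (pullback.snd E'.arrow π ≫ b.arrow) with hc
  have hZc : Z ((c : C)) = Z (pullback E'.arrow π) := Z_iso hZ (Subobject.underlyingIso _)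
  have hac : a ≤ c := Subobject.le_mk_of_comm j (by
    rw [← Category.assoc, hjsnd, Subobject.ofLE_arrow])
  have hcb : c ≤ b := Subobject.mk_le_of_comm (pullback.snd E'.arrow π) rfl
  have hZE' : Z ((E' : C)) = Z ((c : C)) - Z ((a : C)) := by rw [hZc, hZP]; ring
  have hne0 : Z ((E' : C)) ≠ 0 := hp_ne_zero (hZ.2 _ hne)
  have haclt : a < c := lt_of_le_of_ne hac (fun heq => hne0 (by rw [hZE', ← heq, sub_self]))
  have hE : Z (cokernel f) = Z ((b : C)) - Z ((a : C)) := by rw [Z_quot hZ h]; ring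
  have := hsemi c haclt hcb
  rw [← hZE', ← hE] at this
  exact this

theorem lattice_of_semistable {a b : Subobject V} (h : a ≤ b)
    (hss : IsSemistable Z (cokernel (Subobject.ofLE a b h))) :
    a < b ∧ ∀ c : Subobject V, a < c → c ≤ b →
      argLE (Z ((c : C)) - Z ((a : C))) (Z ((b : C)) - Z ((a : C))) := by
  have hlt : a < b := lt_of_le_of_ne h (fun heq => hss.1 (quot_isZero hZ h heq))
  refine ⟨hlt, ?_⟩
  intro c hac hcb
  set u : (c : C) ⟶ cokernel (Subobject.ofLE a b h) :=
    Subobject.ofLE c b hcb ≫ cokernel.π (Subobject.ofLE a b h) with hu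
  have hj'u : Subobject.ofLE a c hac.le ≫ u = 0 := by
    rw [hu, ← Category.assoc, Subobject.ofLE_comp_ofLE]
    exact cokernel.condition _
  have hw0 : Subobject.ofLE a c hac.le ≫ Abelian.factorThruImage u = 0 := by
    rw [← cancel_mono (Abelian.image.ι u), Category.assoc, Abelian.image.fac, zero_comp]
    exact hj'u
  have hfac : ∀ {T : C} (t : T ⟶ (c : C)) (ht : t ≫ Abelian.factorThruImage u = 0),
      Abelian.monoLift (Subobject.ofLE a b h) (t ≫ Subobject.ofLE c b hcb)
        (by
          have ht' : t ≫ u = 0 := by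
            rw [← Abelian.image.fac u, ← Category.assoc, ht, zero_comp]
          rw [hu] at ht'
          rw [Category.assoc]
          exact ht') ≫ Subobject.ofLE a c hac.le = t := by
    intro T t ht
    apply (cancel_mono (Subobject.ofLE c b hcb)).1
    rw [Category.assoc, Subobject.ofLE_comp_ofLE]
    exact Abelian.monoLift_comp _ _ _
  have hlim : IsLimit (KernelFork.ofι (Subobject.ofLE a c hac.le) hw0) := by
    refine KernelFork.IsLimit.ofι _ _
      (fun {T} t ht => Abelian.monoLift (Subobject.ofLE a b h) (t ≫ Subobject.ofLE c b hcb)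
        (by
          have ht' : t ≫ u = 0 := by
            rw [← Abelian.image.fac u, ← Category.assoc, ht, zero_comp]
          rw [hu] at ht'
          rw [Category.assoc]
          exact ht'))
      (fun {T} t ht => hfac t ht)
      (fun {T} t ht m hm => ?_)
    apply (cancel_mono (Subobject.ofLE a c hac.le)).1
    rw [hm, hfac t ht]
  have hse : (ShortComplex.mk (Subobject.ofLE a c hac.le) (Abelian.factorThruImage u)
      hw0).ShortExact :=
    { exact := ShortComplex.exact_of_f_is_kernel _ hlim
      mono_f := inferInstance
      epi_g := inferInstance }
  have hZc : Z ((c : C)) = Z ((a : C)) + Z (Abelian.image u) := hZ.1 _ hse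
  set E' : Subobject (cokernel (Subobject.ofLE a b h)) := Subobject.mk (Abelian.image.ι u)
    with hE'
  have hZE' : Z ((E' : C)) = Z ((c : C)) - Z ((a : C)) := by
    rw [Z_iso hZ (Subobject.underlyingIso (Abelian.image.ι u)), hZc]; ring
  have hne : ¬ IsZero ((E' : C)) := fun hz =>
    (hp_ne_zero (hH_sub hZ hac)) (hZE'.symm.trans (Z_zero hZ hz))
  have hE : Z (cokernel (Subobject.ofLE a b h)) = Z ((b : C)) - Z ((a : C)) := by
    rw [Z_quot hZ h]; ring
  have := hss.2 E' hne
  rwa [hZE', hE] at this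

end Cat

end HNaux

namespace HNaux

section Glue

variable {C : Type*} [Category C] [Abelian C] {Z : C → ℂ} (hZ : IsCentralCharge Z)

include hZ

theorem Z_quot_filt {V : C} (Φ : Filtration V) (i : Fin Φ.n) :
    Z (Φ.quot i) = Z ((Φ.F i.succ : C)) - Z ((Φ.F i.castSucc : C)) := by
  show Z (cokernel (Subobject.ofLE (Φ.F i.castSucc) (Φ.F i.succ) (Φ.lt i).le)) = _
  linear_combination -(Z_quot hZ (Φ.lt i).le)

theorem memHPlus_Z_quot_filt {V : C} (Φ : Filtration V) (i : Fin Φ.n) :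
    memHPlus (Z (Φ.quot i)) :=
  Z_memHPlus_quot hZ (Φ.lt i).le (Φ.lt i)

end Glue

end HNaux

/-- In an abelian category with a central charge in which all objects are Noetherian
and Artinian, every nonzero object admits a Harder–Narasimhan filtration, which is
unique: any two such filtrations have the same length and the same subobjects. -/
theorem existsUnique_harderNarasimhan_filtration {C : Type*} [Category C] [Abelian C]
    (Z : C → ℂ) (hZ : IsCentralCharge Z)
    (hNoeth : ∀ X : C, WellFoundedGT (Subobject X))
    (hArt : ∀ X : C, WellFoundedLT (Subobject X))
    (V : C) (hV : ¬ IsZero V) :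
    ∃ Φ : Filtration V, IsHNFiltration Z Φ ∧
      ∀ Ψ : Filtration V, IsHNFiltration Z Ψ →
        Ψ.n = Φ.n ∧ Set.range Ψ.F = Set.range Φ.F := by
  classical
  haveI := hNoeth V
  haveI := hArt V
  have hH : ∀ a b : Subobject V, a < b →
      memHPlus ((fun s : Subobject V => Z ((s : C))) b - (fun s : Subobject V => Z ((s : C))) a) :=
    fun a b hab => HNaux.hH_sub hZ hab
  have hMod : ∀ a b : Subobject V,
      (fun s : Subobject V => Z ((s : C))) (a ⊔ b) - (fun s : Subobject V => Z ((s : C))) b =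
      (fun s : Subobject V => Z ((s : C))) a - (fun s : Subobject V => Z ((s : C))) (a ⊓ b) :=
    fun a b => HNaux.Z_mod hZ a b
  have hbt : (⊥ : Subobject V) < ⊤ := by
    rcases lt_or_eq_of_le (le_top : (⊥ : Subobject V) ≤ ⊤) with h | h
    · exact h
    · exfalso
      apply hV
      have h1 : IsZero (((⊤ : Subobject V) : C)) := by
        rw [← h]
        exact (isZero_zero C).of_iso Subobject.botCoeIsoZero
      exact h1.of_iso (asIso ((⊤ : Subobject V).arrow)).symm
  obtain ⟨n, f, hn, hf⟩ := HNaux.chain_exists hH hMod ⊥ hbt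
  obtain ⟨hf0, hfn, hflt, hfsemi, hfdec⟩ := hf
  set Φ : Filtration V :=
    { n := n
      F := fun i => f (i : ℕ)
      bot_eq := hf0
      top_eq := hfn
      lt := fun i => hflt (i : ℕ) i.isLt } with hΦ
  have hquotZ : ∀ i : Fin n, Z (Φ.quot i) = Z ((f ((i : ℕ) + 1) : C)) - Z ((f (i : ℕ) : C)) :=
    fun i => HNaux.Z_quot_filt hZ Φ i
  have hHN : IsHNFiltration Z Φ := by
    refine ⟨hn, ?_, ?_⟩
    · intro i
      exact HNaux.semistable_of_lattice hZ (Φ.lt i).le (hflt (i : ℕ) i.isLt)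
        (fun c h1 h2 => hfsemi (i : ℕ) i.isLt c h1 h2)
    · intro i j hij
      have hpi := HNaux.memHPlus_Z_quot_filt hZ Φ i
      have hpj := HNaux.memHPlus_Z_quot_filt hZ Φ j
      rw [HNaux.argLT_iff hpj hpi, hquotZ i, hquotZ j]
      have h2 : (j : ℕ) < n := j.isLt
      have := hfdec (i : ℕ) (by omega)
      rw [HNaux.Fa, HNaux.Fa] at this
      rw [← hij]
      exact this
  refine ⟨Φ, hHN, ?_⟩
  intro Ψ hΨ
  obtain ⟨hΨ1, hΨsemi, hΨdec⟩ := hΨ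
  set g : ℕ → Subobject V := fun k => Ψ.F ⟨min k Ψ.n, by omega⟩ with hg
  have hgk : ∀ k, (hk : k ≤ Ψ.n) → g k = Ψ.F ⟨k, by omega⟩ := by
    intro k hk
    exact congrArg Ψ.F (Fin.ext (min_eq_left hk))
  have hΨquotZ : ∀ k, (hk : k < Ψ.n) →
      Z (Ψ.quot ⟨k, hk⟩) = Z ((g (k + 1) : C)) - Z ((g k : C)) := by
    intro k hk
    rw [hgk k (by omega), hgk (k + 1) (by omega)]
    exact HNaux.Z_quot_filt hZ Ψ ⟨k, hk⟩
  have hgchain : HNaux.NChain (fun s : Subobject V => Z ((s : C))) ⊥ Ψ.n g := by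
    refine ⟨?_, ?_, ?_, ?_, ?_⟩
    · rw [hgk 0 (by omega)]
      have h00 : (⟨0, by omega⟩ : Fin (Ψ.n + 1)) = 0 := Fin.ext (by simp)
      rw [h00, Ψ.bot_eq]
    · rw [hgk Ψ.n le_rfl]
      have hl : (⟨Ψ.n, by omega⟩ : Fin (Ψ.n + 1)) = Fin.last Ψ.n := Fin.ext (by simp [Fin.last])
      rw [hl, Ψ.top_eq]
    · intro k hk
      rw [hgk k (by omega), hgk (k + 1) (by omega)]
      exact Ψ.lt ⟨k, hk⟩
    · intro k hk x h1 h2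
      rw [hgk k (by omega)] at h1
      rw [hgk (k + 1) (by omega)] at h2
      have := (HNaux.lattice_of_semistable hZ (Ψ.lt ⟨k, hk⟩).le (hΨsemi ⟨k, hk⟩)).2 x h1 h2
      rw [hgk k (by omega), hgk (k + 1) (by omega)]
      exact this
    · intro k hk
      have hik : k < Ψ.n := by omega
      have := hΨdec ⟨k, hik⟩ ⟨k + 1, hk⟩ rfl
      have hpi := HNaux.memHPlus_Z_quot_filt hZ Ψ ⟨k, hik⟩
      have hpj := HNaux.memHPlus_Z_quot_filt hZ Ψ ⟨k + 1, hk⟩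
      rw [HNaux.argLT_iff hpj hpi, hΨquotZ k hik, hΨquotZ (k + 1) hk] at this
      rw [HNaux.Fa, HNaux.Fa]
      exact this
  obtain ⟨hnm, hfg⟩ := HNaux.chain_unique hH hMod n ⊥ f Ψ.n g hn hΨ1
    ⟨hf0, hfn, hflt, hfsemi, hfdec⟩ hgchain
  have hΦn : Φ.n = n := rfl
  have hΨF : ∀ i : Fin (Ψ.n + 1), Ψ.F i = f (i : ℕ) := by
    intro i
    have h1 := hfg (i : ℕ) (by omega)
    have h2 := hgk (i : ℕ) (by omega)
    have h3 : (⟨(i : ℕ), by omega⟩ : Fin (Ψ.n + 1)) = i := Fin.ext rfl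
    rw [h2, h3] at h1
    exact h1.symm
  constructor
  · exact hnm.symm
  · apply Set.eq_of_subset_of_subset
    · rintro s ⟨i, rfl⟩
      exact ⟨⟨(i : ℕ), by omega⟩, (hΨF i).symm⟩
    · rintro s ⟨i, rfl⟩
      refine ⟨⟨(i : ℕ), by omega⟩, ?_⟩
      exact hΨF ⟨(i : ℕ), by omega⟩
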